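/- Let ρ : [0, ∞) → ℝ be nonincreasing and left-continuous with ρ(0) ≥ 1 and lim_{x → ∞} ρ(x) < 1. Define ρ⁺(x) = lim_{z ↓ x} ρ(z) (the right limit, which exists by monotonicity), b̄ = sup{x ≥ 0 : ρ(x) ≥ 1} and b̲ = inf{x ≥ 0 : ρ⁺(x) ≤ 1}. Then b̲ ≤ b̄ < ∞ and {x ≥ 0 : ρ⁺(x) ≤ 1 and ρ(x) ≥ 1} = [b̲, b̄]. -/
import Mathlib


open Set

/-- For a nonincreasing, left-continuous `ρ` on `[0,∞)` with `ρ 0 ≥ 1` and `ρ < 1`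
eventually, with `ρp` its right-limit function, the set
`{x ≥ 0 : ρp x ≤ 1 and ρ x ≥ 1}` equals the interval
`[inf{x ≥ 0 : ρp x ≤ 1}, sup{x ≥ 0 : ρ x ≥ 1}]`, and this interval is nonempty. -/
theorem stmt6 (ρ ρp : ℝ → ℝ)
    (hmono : AntitoneOn ρ (Ici 0))
    (hlc : ∀ x > (0:ℝ), ContinuousWithinAt ρ (Iic x) x)
    (h0 : 1 ≤ ρ 0)
    (hM : ∃ M : ℝ, ∀ x ≥ M, ρ x < 1)
    (hρp : ∀ x ≥ (0:ℝ), Filter.Tendsto ρ (nhdsWithin x (Ioi x)) (nhds (ρp x))) :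
    sInf {x : ℝ | 0 ≤ x ∧ ρp x ≤ 1} ≤ sSup {x : ℝ | 0 ≤ x ∧ 1 ≤ ρ x} ∧
    {x : ℝ | 0 ≤ x ∧ ρp x ≤ 1 ∧ 1 ≤ ρ x} =
      Icc (sInf {x : ℝ | 0 ≤ x ∧ ρp x ≤ 1}) (sSup {x : ℝ | 0 ≤ x ∧ 1 ≤ ρ x}) := by
  obtain ⟨M, hM⟩ := hM
  set A : Set ℝ := {x : ℝ | 0 ≤ x ∧ ρp x ≤ 1} with hA
  set B : Set ℝ := {x : ℝ | 0 ≤ x ∧ 1 ≤ ρ x} with hB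
  have hB0 : (0:ℝ) ∈ B := ⟨le_refl 0, h0⟩
  set M' : ℝ := max M 0 with hM'
  have hBbdd : BddAbove B := by
    refine ⟨M', fun x hx => ?_⟩
    by_contra h
    push_neg at h
    exact absurd hx.2 (not_le.mpr (hM x (le_of_lt (lt_of_le_of_lt (le_max_left M 0) h))))
  have hb1 : 0 ≤ sSup B := le_csSup hBbdd hB0
  have hAmemM : M' ∈ A := by
    refine ⟨le_max_right M 0, ?_⟩
    refine le_of_tendsto (hρp M' (le_max_right M 0)) ?_
    filter_upwards [self_mem_nhdsWithin] with z hz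
    exact le_of_lt (hM z (le_trans (le_max_left M 0) (le_of_lt hz)))
  have hAne : A.Nonempty := ⟨M', hAmemM⟩
  have hAbdd : BddBelow A := ⟨0, fun x hx => hx.1⟩
  have hb2 : 0 ≤ sInf A := le_csInf hAne fun x hx => hx.1
  -- ρ z < 1 for z > sSup B
  have K1 : ∀ z, sSup B < z → ρ z < 1 := by
    intro z hz
    by_contra h
    push_neg at h
    exact absurd (le_csSup hBbdd (⟨le_trans hb1 (le_of_lt hz), h⟩ : z ∈ B)) (not_le.mpr hz)
  have hb3 : sSup B ∈ A := by
    refine ⟨hb1, le_of_tendsto (hρp _ hb1) ?_⟩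
    filter_upwards [self_mem_nhdsWithin] with z hz
    exact le_of_lt (K1 z hz)
  -- comparison of right limit with later values
  have hcomp : ∀ a z : ℝ, 0 ≤ a → a < z → ρ z ≤ ρp a := by
    intro a z ha haz
    refine ge_of_tendsto (hρp a ha) ?_
    filter_upwards [self_mem_nhdsWithin,
      mem_nhdsWithin_of_mem_nhds (Iio_mem_nhds haz)] with w hw1 hw2
    exact hmono (le_trans ha (le_of_lt hw1)) (le_trans ha (le_of_lt haz)) (le_of_lt hw2)
  -- ρp x ≤ 1 for x ≥ sInf A
  have K2 : ∀ x, sInf A ≤ x → ρp x ≤ 1 := by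
    intro x hx
    refine le_of_tendsto (hρp x (le_trans hb2 hx)) ?_
    filter_upwards [self_mem_nhdsWithin] with z hz
    obtain ⟨a, haA, haz⟩ := exists_lt_of_csInf_lt hAne (lt_of_le_of_lt hx hz)
    exact le_trans (hcomp a z haA.1 haz) haA.2
  -- 1 ≤ ρ x for 0 ≤ x ≤ sSup B
  have K3lt : ∀ x, 0 ≤ x → x < sSup B → 1 ≤ ρ x := by
    intro x hx0 hx
    obtain ⟨b, hbB, hxb⟩ := exists_lt_of_lt_csSup ⟨0, hB0⟩ hx
    exact le_trans hbB.2 (hmono hx0 hbB.1 (le_of_lt hxb))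
  have K3 : ∀ x, 0 ≤ x → x ≤ sSup B → 1 ≤ ρ x := by
    intro x hx0 hx
    rcases eq_or_lt_of_le hx0 with h | h
    · exact h ▸ h0
    rcases lt_or_eq_of_le hx with h' | h'
    · exact K3lt x hx0 h'
    · have := (hlc x h).tendsto.mono_left (nhdsWithin_mono x Iio_subset_Iic_self)
      refine ge_of_tendsto this ?_
      filter_upwards [self_mem_nhdsWithin,
        mem_nhdsWithin_of_mem_nhds (Ioi_mem_nhds h)] with w hw1 hw2
      exact K3lt w (le_of_lt hw2) (h' ▸ hw1)
  refine ⟨csInf_le hAbdd hb3, ?_⟩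
  ext x
  constructor
  · rintro ⟨hx0, hp, hr⟩
    exact ⟨csInf_le hAbdd ⟨hx0, hp⟩, le_csSup hBbdd ⟨hx0, hr⟩⟩
  · rintro ⟨h1, h2⟩
    exact ⟨le_trans hb2 h1, K2 x h1, K3 x (le_trans hb2 h1) h2⟩
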